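/- Let K be a field of characteristic zero and let P : K^n → K be a bisymmetric polynomial function of degree p ≥ 2. Then the homogeneous component P_p of P of degree p is itself a bisymmetric function. -/

import Mathlib

open Polynomial MvPolynomial

private lemma eval_aeval' {K : Type*} [CommSemiring K] {n : ℕ} (P : MvPolynomial (Fin n) K)
    (g : Fin n → Polynomial K) (t : K) :
    (MvPolynomial.aeval g P).eval t = MvPolynomial.eval (fun i => (g i).eval t) P := by
  induction P using MvPolynomial.induction_on with
  | C a => simp
  | add p q hp hq => simp [hp, hq]
  | mul_X p i hp => simp [hp]

private lemma coeff_aeval_CX {K : Type*} [CommRing K] {n : ℕ}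
    (P : MvPolynomial (Fin n) K) (x : Fin n → K) (k : ℕ) :
    (MvPolynomial.aeval (fun j => Polynomial.C (x j) * Polynomial.X) P).coeff k
      = MvPolynomial.eval x (MvPolynomial.homogeneousComponent k P) := by
  induction P using MvPolynomial.induction_on' with
  | add p q hp hq => simp [map_add, hp, hq]
  | monomial d a =>
    rw [MvPolynomial.aeval_monomial]
    have hprod : (d.prod fun i e => (Polynomial.C (x i) * Polynomial.X) ^ e)
        = Polynomial.C (d.prod fun i e => x i ^ e) * Polynomial.X ^ d.degree := by
      rw [Finsupp.prod, Finsupp.prod, Finsupp.degree_apply, map_prod,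
        ← Finset.prod_pow_eq_pow_sum, ← Finset.prod_mul_distrib]
      exact Finset.prod_congr rfl fun i _ => by rw [mul_pow, map_pow]
    have hcomp : MvPolynomial.homogeneousComponent k (MvPolynomial.monomial d a)
        = if d.degree = k then MvPolynomial.monomial d a else 0 := by
      ext e
      rw [MvPolynomial.coeff_homogeneousComponent]
      rcases eq_or_ne d e with rfl | hne
      · split_ifs <;> simp_all [MvPolynomial.coeff_monomial]
      · split_ifs <;> simp_all [MvPolynomial.coeff_monomial, hne]
    rw [hprod, hcomp, Polynomial.algebraMap_eq, ← mul_assoc, ← map_mul,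
      Polynomial.coeff_C_mul, Polynomial.coeff_X_pow]
    by_cases h : d.degree = k
    · rw [if_pos h, if_pos h.symm, MvPolynomial.eval_monomial, mul_one]
    · rw [if_neg h, if_neg (fun hk => h hk.symm), mul_zero, map_zero]

private lemma natDegree_aeval_CX {K : Type*} [CommRing K] {n : ℕ}
    (P : MvPolynomial (Fin n) K) (x : Fin n → K) :
    (MvPolynomial.aeval (fun j => Polynomial.C (x j) * Polynomial.X) P).natDegree
      ≤ P.totalDegree := by
  rw [Polynomial.natDegree_le_iff_coeff_eq_zero]
  intro m hm
  rw [coeff_aeval_CX, MvPolynomial.homogeneousComponent_eq_zero _ _ hm, map_zero]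

private lemma coeff_prod_top {K : Type*} [CommSemiring K] {ι : Type*} (s : Finset ι)
    (f : ι → Polynomial K) (m : ι → ℕ) (h : ∀ i ∈ s, (f i).natDegree ≤ m i) :
    (∏ i ∈ s, f i).coeff (∑ i ∈ s, m i) = ∏ i ∈ s, (f i).coeff (m i) := by
  induction s using Finset.cons_induction with
  | empty => simp
  | cons a s ha ih =>
    rw [Finset.prod_cons, Finset.sum_cons, Polynomial.coeff_mul_add_eq_of_natDegree_le
      (h a (Finset.mem_cons_self a s))
      ((Polynomial.natDegree_prod_le s f).trans
        (Finset.sum_le_sum fun i hi => h i (Finset.mem_cons_of_mem hi))),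
      Finset.prod_cons, ih fun i hi => h i (Finset.mem_cons_of_mem hi)]

private lemma coeff_aeval_top {K : Type*} [CommRing K] {n p : ℕ} (hp : 1 ≤ p)
    (P : MvPolynomial (Fin n) K) (hP : P.totalDegree ≤ p)
    (Q : Fin n → Polynomial K) (hQ : ∀ i, (Q i).natDegree ≤ p) :
    (MvPolynomial.aeval Q P).coeff (p * p)
      = MvPolynomial.eval (fun i => (Q i).coeff p) (MvPolynomial.homogeneousComponent p P) := by
  conv_lhs => rw [P.as_sum]
  rw [MvPolynomial.homogeneousComponent_apply, map_sum, map_sum, Polynomial.finset_sum_coeff,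
    Finset.sum_filter]
  refine Finset.sum_congr rfl fun d hd => ?_
  have hdle : d.degree ≤ p := le_trans (MvPolynomial.le_totalDegree hd) hP
  rw [MvPolynomial.aeval_monomial, Polynomial.algebraMap_eq, Polynomial.coeff_C_mul]
  by_cases h : d.degree = p
  · rw [if_pos h, MvPolynomial.eval_monomial]
    congr 1
    have hsum : (∑ i ∈ d.support, d i * p) = p * p := by
      rw [← Finset.sum_mul]
      rw [Finsupp.degree_apply] at h
      rw [h, mul_comm]
    rw [Finsupp.prod, Finsupp.prod, ← hsum,
      coeff_prod_top d.support (fun i => Q i ^ d i) (fun i => d i * p)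
        (fun i _ => (Polynomial.natDegree_pow_le).trans
          (Nat.mul_le_mul_left (d i) (hQ i)))]
    exact Finset.prod_congr rfl fun i _ => Polynomial.coeff_pow_of_natDegree_le (hQ i)
  · rw [if_neg h]
    have hlt : d.degree < p := lt_of_le_of_ne hdle h
    have : (d.prod fun i e => Q i ^ e).natDegree < p * p := by
      refine lt_of_le_of_lt ((Polynomial.natDegree_prod_le _ _).trans
        (Finset.sum_le_sum fun i (_ : i ∈ d.support) =>
          (Polynomial.natDegree_pow_le).trans (Nat.mul_le_mul_left (d i) (hQ i)))) ?_
      rw [← Finset.sum_mul]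
      calc (∑ i ∈ d.support, d i) * p = d.degree * p := by rw [Finsupp.degree_apply]
        _ < p * p := by exact Nat.mul_lt_mul_of_lt_of_le hlt le_rfl hp
    rw [Polynomial.coeff_eq_zero_of_natDegree_lt this, mul_zero]

/-- A function `f : S^n → S` is bisymmetric if for every `n × n` matrix `X` over `S`,
applying `f` to the rows and then to the results equals applying `f` to the columns
and then to the results. -/
def Bisym {S : Type*} {n : ℕ} (f : (Fin n → S) → S) : Prop :=
  ∀ X : Fin n → Fin n → S,
    f (fun i => f (X i)) = f (fun j => f (fun i => X i j))

/-- The top homogeneous component of a bisymmetric polynomial function of degree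
`p ≥ 2` is bisymmetric. -/
theorem bisym_top_homogeneousComponent
    {K : Type*} [Field K] [CharZero K] {n p : ℕ}
    (P : MvPolynomial (Fin n) K)
    (hbi : Bisym fun x : Fin n → K => MvPolynomial.eval x P)
    (hdeg : P.totalDegree = p) (hp : 2 ≤ p) :
    Bisym fun x : Fin n → K =>
      MvPolynomial.eval x (MvPolynomial.homogeneousComponent p P) := by
  intro x
  have hp1 : 1 ≤ p := le_trans (by norm_num) hp
  set Q : Fin n → Polynomial K :=
    fun i => MvPolynomial.aeval (fun j => Polynomial.C (x i j) * Polynomial.X) P with hQ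
  set Qc : Fin n → Polynomial K :=
    fun j => MvPolynomial.aeval (fun i => Polynomial.C (x i j) * Polynomial.X) P with hQc
  have hFG : MvPolynomial.aeval Q P = MvPolynomial.aeval Qc P := by
    apply Polynomial.funext
    intro t
    have key : ∀ y : Fin n → K,
        (MvPolynomial.aeval (fun j => Polynomial.C (y j) * Polynomial.X) P).eval t
          = MvPolynomial.eval (fun j => y j * t) P := by
      intro y; rw [eval_aeval']; simp
    calc (MvPolynomial.aeval Q P).eval t
        = MvPolynomial.eval (fun i => MvPolynomial.eval (fun j => x i j * t) P) P := by
          rw [eval_aeval']; simp only [hQ]; simp only [key]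
      _ = MvPolynomial.eval (fun j => MvPolynomial.eval (fun i => x i j * t) P) P :=
          hbi fun i j => x i j * t
      _ = (MvPolynomial.aeval Qc P).eval t := by
          rw [eval_aeval']; simp only [hQc]; simp only [key]
  have hcoeff := congrArg (fun F => Polynomial.coeff F (p * p)) hFG
  rw [coeff_aeval_top hp1 P hdeg.le Q
        (fun i => (natDegree_aeval_CX P (x i)).trans hdeg.le),
      coeff_aeval_top hp1 P hdeg.le Qc
        (fun j => (natDegree_aeval_CX P (fun i => x i j)).trans hdeg.le)] at hcoeff
  simp only [hQ, hQc, coeff_aeval_CX] at hcoeff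
  exact hcoeff
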